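/- Let n ≥ 2, 0 < p < 1, and let Q be the n×n matrix with entries Q_{ij} = ((1−p)/(1−p^n))·p^{((j−i−1) mod n)} for i,j ∈ {1,...,n}. Then lim_{h→∞} Q^h = Q^∞, where Q^∞ is the n×n matrix all of whose entries equal 1/n. -/

import Mathlib

open Filter Finset

private lemma emod_cancel' {n x y d : ℤ} (h : (x + d) % n = (y + d) % n) :
    x % n = y % n := by
  have h2 : ((x + d) - d) % n = ((y + d) - d) % n := by
    rw [Int.sub_emod, h, ← Int.sub_emod]
  simpa using h2

private lemma emod_cancel_neg' {n x y : ℤ} (h : (-x) % n = (-y) % n) :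
    x % n = y % n := by
  have h2 : ((n:ℤ) - -x) % n = (n - -y) % n := by
    rw [Int.sub_emod, h, ← Int.sub_emod]
  calc x % n = (-(-x)) % n := by rw [Int.neg_neg]
    _ = (n - -x) % n := Int.neg_emod_eq_sub_emod
    _ = (n - -y) % n := h2
    _ = (-(-y)) % n := Int.neg_emod_eq_sub_emod.symm
    _ = y % n := by rw [Int.neg_neg]

private lemma sum_pow_emod' {n : ℕ} (hn : 0 < n) (p : ℝ) (g : Fin n → ℤ)
    (hg : Function.Injective fun x : Fin n => g x % (n : ℤ)) :
    ∑ x : Fin n, p ^ ((g x % (n : ℤ)).toNat) = ∑ k ∈ Finset.range n, p ^ k := by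
  have hn' : (0:ℤ) < n := by exact_mod_cast hn
  have hb : ∀ x : Fin n, (g x % (n : ℤ)).toNat < n := by
    intro x
    have h1 := Int.emod_nonneg (g x) (by omega : (n:ℤ) ≠ 0)
    have h2 := Int.emod_lt_of_pos (g x) hn'
    omega
  let e : Fin n → Fin n := fun x => ⟨(g x % (n : ℤ)).toNat, hb x⟩
  have he : Function.Bijective e := by
    rw [← Finite.injective_iff_bijective]
    intro x y hxy
    apply hg
    have hv : (g x % (n:ℤ)).toNat = (g y % (n:ℤ)).toNat := by
      simpa [e, Fin.ext_iff] using hxy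
    have h1 := Int.emod_nonneg (g x) (by omega : (n:ℤ) ≠ 0)
    have h2 := Int.emod_nonneg (g y) (by omega : (n:ℤ) ≠ 0)
    show g x % (n:ℤ) = g y % (n:ℤ)
    omega
  rw [← Fin.sum_univ_eq_sum_range]
  exact Fintype.sum_bijective e he _ _ (fun x => rfl)

private lemma doeblin' {n : ℕ} (A : Matrix (Fin n) (Fin n) ℝ) (δ : ℝ)
    (hδ : ∀ i j, δ ≤ A i j) (hrow : ∀ i, ∑ j, A i j = 1)
    (v : Fin n → ℝ) (M m : ℝ) (hm : ∀ k, m ≤ v k) (hM : ∀ k, v k ≤ M)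
    (hmM : m ≤ M) (i i' : Fin n) :
    (∑ k, A i k * v k) - (∑ k, A i' k * v k) ≤ (1 - n * δ) * (M - m) := by
  have h1 : ∑ k, (A i k - A i' k) * (v k - m)
      = (∑ k, A i k * v k) - (∑ k, A i' k * v k) := by
    have e : ∀ k : Fin n, (A i k - A i' k) * (v k - m)
        = (A i k * v k - A i' k * v k) - (m * A i k - m * A i' k) := by
      intro k; ring
    rw [Finset.sum_congr rfl fun k _ => e k, Finset.sum_sub_distrib,
      Finset.sum_sub_distrib, Finset.sum_sub_distrib, ← Finset.mul_sum, ← Finset.mul_sum,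
      hrow i, hrow i']
    ring
  have h2 : ∀ k : Fin n, (A i k - A i' k) * (v k - m)
      ≤ (A i k - min (A i k) (A i' k)) * (M - m) := by
    intro k
    rcases le_total (A i k) (A i' k) with h | h
    · rw [min_eq_left h]
      have hm' := hm k; have hM' := hM k
      nlinarith
    · rw [min_eq_right h]
      have hm' := hm k; have hM' := hM k
      nlinarith
  have h3 : ∑ k, (A i k - min (A i k) (A i' k)) * (M - m)
      = (1 - ∑ k, min (A i k) (A i' k)) * (M - m) := by
    rw [← Finset.sum_mul, Finset.sum_sub_distrib, hrow i]
  have h4 : (n : ℝ) * δ ≤ ∑ k, min (A i k) (A i' k) := by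
    calc (n:ℝ) * δ = ∑ _k : Fin n, δ := by simp [mul_comm]
    _ ≤ _ := Finset.sum_le_sum fun k _ => le_min (hδ i k) (hδ i' k)
  calc (∑ k, A i k * v k) - (∑ k, A i' k * v k)
      = ∑ k, (A i k - A i' k) * (v k - m) := h1.symm
    _ ≤ ∑ k, (A i k - min (A i k) (A i' k)) * (M - m) := Finset.sum_le_sum fun k _ => h2 k
    _ = (1 - ∑ k, min (A i k) (A i' k)) * (M - m) := h3
    _ ≤ (1 - n * δ) * (M - m) := by
        apply mul_le_mul_of_nonneg_right _ (by linarith)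
        linarith

theorem skip_ring_matrix_powers_converge
    (n : ℕ) (hn : 2 ≤ n) (p : ℝ) (hp0 : 0 < p) (hp1 : p < 1)
    (Q : Matrix (Fin n) (Fin n) ℝ)
    (hQ : ∀ i j : Fin n,
      Q i j = ((1 - p) / (1 - p ^ n)) * p ^ ((((j : ℤ) - (i : ℤ) - 1) % (n : ℤ)).toNat)) :
    Tendsto (fun h : ℕ => Q ^ h) atTop
      (nhds (Matrix.of fun _ _ : Fin n => (1 / (n : ℝ)))) := by
  have hnpos : 0 < n := by omega
  have hnz : (n:ℤ) ≠ 0 := by exact_mod_cast hnpos.ne'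
  have hnZ : (0:ℤ) < (n:ℤ) := by exact_mod_cast hnpos
  have hnR : (0:ℝ) < (n:ℝ) := by exact_mod_cast hnpos
  have i0 : Fin n := ⟨0, hnpos⟩
  have hpn : p ^ n < 1 := pow_lt_one₀ hp0.le hp1 (by omega)
  have hpn' : (0:ℝ) < 1 - p ^ n := by linarith
  set C : ℝ := (1 - p) / (1 - p ^ n) with hC
  have hCpos : 0 < C := div_pos (by linarith) hpn'
  set δ : ℝ := C * p ^ (n - 1) with hδdef
  have hδpos : 0 < δ := mul_pos hCpos (pow_pos hp0 _)
  -- entries of Q are at least δ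
  have hentry : ∀ i j, δ ≤ Q i j := by
    intro i j
    rw [hQ]
    apply mul_le_mul_of_nonneg_left _ hCpos.le
    apply pow_le_pow_of_le_one hp0.le hp1.le
    have h1 := Int.emod_nonneg ((j:ℤ) - i - 1) hnz
    have h2 := Int.emod_lt_of_pos ((j:ℤ) - i - 1) hnZ
    omega
  -- row sums are 1
  have hgeom : C * ∑ k ∈ Finset.range n, p ^ k = 1 := by
    rw [geom_sum_eq hp1.ne, hC]
    have hpne : p - 1 ≠ 0 := by linarith
    field_simp
    ring
  have hrow : ∀ i, ∑ j, Q i j = 1 := by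
    intro i
    have hinj : Function.Injective fun x : Fin n => ((x:ℤ) - i - 1) % (n:ℤ) := by
      intro x y hxy
      have hmm : (x:ℤ) % n = (y:ℤ) % n := by
        apply emod_cancel' (d := -(i:ℤ) - 1)
        have e1 : (x:ℤ) + (-(i:ℤ) - 1) = (x:ℤ) - i - 1 := by ring
        have e2 : (y:ℤ) + (-(i:ℤ) - 1) = (y:ℤ) - i - 1 := by ring
        rw [e1, e2]; exact hxy
      have hx0 : (0:ℤ) ≤ (x:ℤ) := by positivity
      have hy0 : (0:ℤ) ≤ (y:ℤ) := by positivity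
      have hxlt : (x:ℤ) < n := by exact_mod_cast x.isLt
      have hylt : (y:ℤ) < n := by exact_mod_cast y.isLt
      rw [Int.emod_eq_of_lt hx0 hxlt, Int.emod_eq_of_lt hy0 hylt] at hmm
      exact Fin.ext (by exact_mod_cast hmm)
    calc ∑ j, Q i j = C * ∑ x : Fin n, p ^ ((((x:ℤ) - i - 1) % (n:ℤ)).toNat) := by
          rw [Finset.mul_sum]; exact Finset.sum_congr rfl fun j _ => hQ i j
      _ = C * ∑ k ∈ Finset.range n, p ^ k := by
          rw [sum_pow_emod' hnpos p _ hinj]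
      _ = 1 := hgeom
  -- column sums are 1
  have hcol : ∀ j, ∑ i, Q i j = 1 := by
    intro j
    have hinj : Function.Injective fun x : Fin n => ((j:ℤ) - x - 1) % (n:ℤ) := by
      intro x y hxy
      have hneg : (-(x:ℤ)) % n = (-(y:ℤ)) % n := by
        apply emod_cancel' (d := (j:ℤ) - 1)
        have e1 : -(x:ℤ) + ((j:ℤ) - 1) = (j:ℤ) - x - 1 := by ring
        have e2 : -(y:ℤ) + ((j:ℤ) - 1) = (j:ℤ) - y - 1 := by ring
        rw [e1, e2]; exact hxy
      have hmm := emod_cancel_neg' hneg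
      have hx0 : (0:ℤ) ≤ (x:ℤ) := by positivity
      have hy0 : (0:ℤ) ≤ (y:ℤ) := by positivity
      have hxlt : (x:ℤ) < n := by exact_mod_cast x.isLt
      have hylt : (y:ℤ) < n := by exact_mod_cast y.isLt
      rw [Int.emod_eq_of_lt hx0 hxlt, Int.emod_eq_of_lt hy0 hylt] at hmm
      exact Fin.ext (by exact_mod_cast hmm)
    calc ∑ i, Q i j = C * ∑ x : Fin n, p ^ ((((j:ℤ) - x - 1) % (n:ℤ)).toNat) := by
          rw [Finset.mul_sum]; exact Finset.sum_congr rfl fun i _ => hQ i j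
      _ = C * ∑ k ∈ Finset.range n, p ^ k := by
          rw [sum_pow_emod' hnpos p _ hinj]
      _ = 1 := hgeom
  -- column sums of powers are 1
  have hcolpow : ∀ h : ℕ, ∀ j, ∑ i, (Q ^ h) i j = 1 := by
    intro h
    induction h with
    | zero =>
      intro j
      simp [Matrix.one_apply]
    | succ h ih =>
      intro j
      rw [pow_succ]
      calc ∑ i, (Q ^ h * Q) i j = ∑ i, ∑ k, (Q ^ h) i k * Q k j := by
            simp [Matrix.mul_apply]
        _ = ∑ k, (∑ i, (Q ^ h) i k) * Q k j := by
            rw [Finset.sum_comm]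
            exact Finset.sum_congr rfl fun k _ => (Finset.sum_mul ..).symm
        _ = ∑ k, Q k j := by
            exact Finset.sum_congr rfl fun k _ => by rw [ih k, one_mul]
        _ = 1 := hcol j
  -- contraction factor
  have hδn : (n:ℝ) * δ ≤ 1 := by
    calc (n:ℝ) * δ = ∑ _j : Fin n, δ := by simp [mul_comm]
      _ ≤ ∑ j, Q i0 j := Finset.sum_le_sum fun j _ => hentry i0 j
      _ = 1 := hrow i0
  have hr0 : (0:ℝ) ≤ 1 - n * δ := by linarith
  have hr1 : 1 - (n:ℝ) * δ < 1 := by nlinarith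
  -- oscillation bound
  have key : ∀ h : ℕ, ∀ j i i', (Q ^ h) i j - (Q ^ h) i' j ≤ (1 - (n:ℝ) * δ) ^ h := by
    intro h
    induction h with
    | zero =>
      intro j i i'
      simp only [pow_zero, Matrix.one_apply]
      split_ifs <;> norm_num
    | succ h ih =>
      intro j i i'
      obtain ⟨imax, _, hmax⟩ := Finset.exists_max_image Finset.univ
        (fun k => (Q ^ h) k j) ⟨i0, Finset.mem_univ _⟩
      obtain ⟨imin, _, hmin⟩ := Finset.exists_min_image Finset.univ
        (fun k => (Q ^ h) k j) ⟨i0, Finset.mem_univ _⟩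
      have hmM : (Q ^ h) imin j ≤ (Q ^ h) imax j := hmin imax (Finset.mem_univ _)
      have hstep := doeblin' Q δ hentry hrow (fun k => (Q ^ h) k j)
        ((Q ^ h) imax j) ((Q ^ h) imin j)
        (fun k => hmin k (Finset.mem_univ k)) (fun k => hmax k (Finset.mem_univ k))
        hmM i i'
      have heq : ∀ a : Fin n, (Q ^ (h+1)) a j = ∑ k, Q a k * (Q ^ h) k j := by
        intro a
        rw [pow_succ']
        simp [Matrix.mul_apply]
      rw [heq i, heq i']
      calc (∑ k, Q i k * (Q ^ h) k j) - (∑ k, Q i' k * (Q ^ h) k j)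
          ≤ (1 - (n:ℝ) * δ) * ((Q ^ h) imax j - (Q ^ h) imin j) := hstep
        _ ≤ (1 - (n:ℝ) * δ) * (1 - (n:ℝ) * δ) ^ h :=
            mul_le_mul_of_nonneg_left (ih j imax imin) hr0
        _ = (1 - (n:ℝ) * δ) ^ (h + 1) := (pow_succ' _ _).symm
  -- entrywise bound
  have hsum1 : ∑ _i : Fin n, (1 / (n:ℝ)) = 1 := by
    simp
    field_simp
  have habs : ∀ h : ℕ, ∀ i j, |(Q ^ h) i j - 1 / n| ≤ (1 - (n:ℝ) * δ) ^ h := by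
    intro h i j
    obtain ⟨ilo, _, hlo⟩ : ∃ i' ∈ Finset.univ, (Q ^ h) i' j ≤ 1 / (n:ℝ) := by
      apply Finset.exists_le_of_sum_le ⟨i0, Finset.mem_univ _⟩
      rw [hcolpow h j, hsum1]
    obtain ⟨ihi, _, hhi⟩ : ∃ i' ∈ Finset.univ, 1 / (n:ℝ) ≤ (Q ^ h) i' j := by
      apply Finset.exists_le_of_sum_le ⟨i0, Finset.mem_univ _⟩
      rw [hcolpow h j, hsum1]
    rw [abs_le]
    constructor
    · have := key h j ihi i
      linarith
    · have := key h j i ilo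
      linarith
  -- conclude
  have hmain : Tendsto (fun h : ℕ => fun i j : Fin n => (Q ^ h) i j) atTop
      (nhds fun _ _ : Fin n => (1 / (n:ℝ))) := by
    rw [tendsto_pi_nhds]
    intro i
    rw [tendsto_pi_nhds]
    intro j
    have h0 : Tendsto (fun h : ℕ => (1 - (n:ℝ) * δ) ^ h) atTop (nhds 0) :=
      tendsto_pow_atTop_nhds_zero_of_lt_one hr0 hr1
    have h1 : Tendsto (fun h : ℕ => (Q ^ h) i j - 1 / (n:ℝ)) atTop (nhds 0) := by
      apply squeeze_zero_norm _ h0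
      intro h
      rw [Real.norm_eq_abs]
      exact habs h i j
    have h2 := h1.add_const (1 / (n:ℝ))
    simpa using h2
  exact hmain
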